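/- Let (Ω, μ) be a probability space and let X₁, …, X_K : Ω → ℝ be random variables such that for every k, X_k(ω) > 0 for almost every ω, the function ω ↦ Real.log (X_k ω) is integrable, and the function ω ↦ Real.log (∑_{k=1}^K X_k ω) is integrable. Then ∫ log (∑_{k=1}^K X_k(ω)) dμ(ω) ≥ log (∑_{k=1}^K exp(∫ log X_k(ω) dμ(ω))). -/

import Mathlib

open MeasureTheory

/-- Lemma 1 of the paper (Paisley et al. bound): for positive random variables
`X k` on a probability space, `E[log ∑ X k] ≥ log ∑ exp(E[log X k])`. -/
theorem stmt_0 {Ω : Type*} [MeasurableSpace Ω] (μ : Measure Ω) [IsProbabilityMeasure μ]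
    (K : ℕ) (X : Fin K → Ω → ℝ)
    (hpos : ∀ k, ∀ᵐ ω ∂μ, 0 < X k ω)
    (hint : ∀ k, Integrable (fun ω => Real.log (X k ω)) μ)
    (hsum : Integrable (fun ω => Real.log (∑ k, X k ω)) μ) :
    ∫ ω, Real.log (∑ k, X k ω) ∂μ ≥
      Real.log (∑ k, Real.exp (∫ ω, Real.log (X k ω) ∂μ)) := by
  rcases Nat.eq_zero_or_pos K with hK | hK
  · subst hK; simp
  · have hne : Nonempty (Fin K) := Fin.pos_iff_nonempty.mp hK
    set a : Fin K → ℝ := fun k => ∫ ω, Real.log (X k ω) ∂μ with ha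
    set S : ℝ := ∑ k, Real.exp (a k) with hS
    have hSpos : 0 < S := Finset.sum_pos (fun k _ => Real.exp_pos _) Finset.univ_nonempty
    set w : Fin K → ℝ := fun k => Real.exp (a k) / S with hw
    have hwpos : ∀ k, 0 < w k := fun k => div_pos (Real.exp_pos _) hSpos
    have hwsum : ∑ k, w k = 1 := by
      simp only [hw, ← Finset.sum_div, ← hS]
      exact div_self hSpos.ne'
    have hlogw : ∀ k, Real.log (w k) = a k - Real.log S := by
      intro k
      simp [hw, Real.log_div (Real.exp_pos _).ne' hSpos.ne', Real.log_exp]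
    have hae : ∀ᵐ ω ∂μ, ∀ k, 0 < X k ω := ae_all_iff.mpr hpos
    have key : ∀ᵐ ω ∂μ, ∑ k, w k * (Real.log (X k ω) - Real.log (w k)) ≤
        Real.log (∑ k, X k ω) := by
      filter_upwards [hae] with ω hω
      have h1 : ∑ k, w k • (X k ω / w k) = ∑ k, X k ω := by
        apply Finset.sum_congr rfl; intro k _
        simp only [smul_eq_mul]
        have := (hwpos k).ne'; field_simp
      have h2 := (strictConcaveOn_log_Ioi.concaveOn).le_map_sum
        (t := Finset.univ) (w := w) (p := fun k => X k ω / w k)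
        (fun k _ => (hwpos k).le) hwsum
        (fun k _ => div_pos (hω k) (hwpos k))
      rw [h1] at h2
      refine le_trans (le_of_eq ?_) h2
      apply Finset.sum_congr rfl; intro k _
      rw [smul_eq_mul, Real.log_div (hω k).ne' (hwpos k).ne']
    have hint2 : ∀ k, Integrable (fun ω => w k * (Real.log (X k ω) - Real.log (w k))) μ :=
      fun k => ((hint k).sub (integrable_const _)).const_mul _
    have hIle := integral_mono_ae
      (integrable_finset_sum Finset.univ (fun k _ => hint2 k)) hsum key
    have hcalc : ∫ ω, ∑ k, w k * (Real.log (X k ω) - Real.log (w k)) ∂μ = Real.log S := by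
      rw [integral_finset_sum _ (fun k _ => hint2 k)]
      have h3 : ∀ k, ∫ ω, w k * (Real.log (X k ω) - Real.log (w k)) ∂μ
          = w k * Real.log S := by
        intro k
        rw [integral_const_mul _ _, integral_sub (hint k) (integrable_const _), integral_const]
        simp only [measure_univ, ENNReal.toReal_one, one_smul, hlogw k, ← ha, probReal_univ]
        rw [show (∫ ω, Real.log (X k ω) ∂μ) = a k from rfl]
        ring
      simp only [h3, ← Finset.sum_mul, hwsum, one_mul]
    calc Real.log (∑ k, Real.exp (a k))
        = Real.log S := by rw [hS]
      _ = ∫ ω, ∑ k, w k * (Real.log (X k ω) - Real.log (w k)) ∂μ := hcalc.symm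
      _ ≤ ∫ ω, Real.log (∑ k, X k ω) ∂μ := hIle
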